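/- Let R be a Noetherian commutative ring and r ∈ R. Then the r-torsion in any flat R-module F is bounded: there exists m ≥ 1 such that for all x ∈ F and n ≥ 1, r^n x = 0 implies r^m x = 0. -/

import Mathlib

/-- Let `R` be a Noetherian commutative ring and `r ∈ R`.  Then the
`r`-torsion in any flat `R`-module `F` is bounded: there exists `m ≥ 1` such that for all
`x ∈ F` and `n ≥ 1`, `rⁿ x = 0` implies `r^m x = 0`. -/
theorem flat_module_bounded_torsion_of_noetherian
    (R : Type) [CommRing R] [IsNoetherianRing R] (r : R)
    (F : Type) [AddCommGroup F] [Module R F] (hF : Module.Flat R F) :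
    ∃ m : ℕ, 1 ≤ m ∧ ∀ (x : F) (n : ℕ), 1 ≤ n → r ^ n • x = 0 → r ^ m • x = 0 := by
  -- the chain of annihilators of `r^k` in `R`
  let A : ℕ →o Submodule R R :=
    ⟨fun k => LinearMap.ker (LinearMap.mulLeft R (r ^ k)), by
      intro j k hjk a ha
      simp only [LinearMap.mem_ker, LinearMap.mulLeft_apply] at *
      calc r ^ k * a = r ^ (k - j) * (r ^ j * a) := by
            rw [← mul_assoc, ← pow_add]
            congr 2
            omega
        _ = 0 := by rw [ha, mul_zero]⟩
  obtain ⟨n₀, hn₀⟩ := monotone_stabilizes_iff_noetherian.mpr ‹IsNoetherianRing R› A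
  refine ⟨n₀ + 1, le_add_self, fun x n hn hx => ?_⟩
  set m := n₀ + 1
  set N := max n m with hN
  have hxN : r ^ N • x = 0 := by
    have : r ^ N • x = r ^ (N - n) • (r ^ n • x) := by
      rw [smul_smul, ← pow_add]
      congr 2
      omega
    rw [this, hx, smul_zero]
  -- apply the equational criterion to the one-term relation `r^N • x = 0`
  have hrel : ∑ _i : Unit, (fun _ : Unit => r ^ N) _i • (fun _ : Unit => x) _i = 0 := by
    simpa using hxN
  obtain ⟨κ, a, y, hay, ha⟩ := Module.Flat.isTrivialRelation_of_sum_smul_eq_zero hrel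
  have hx' : x = ∑ j, a () j • y j := hay ()
  have key : ∀ j, r ^ m * a () j = 0 := by
    intro j
    have hNm : r ^ N * a () j = 0 := by simpa using ha j
    have hmem : a () j ∈ A N := by
      simp only [A, LinearMap.mem_ker, LinearMap.mulLeft_apply, OrderHom.coe_mk]
      exact hNm
    have hA : A m = A N := hn₀ m (Nat.le_succ _) ▸ hn₀ N (le_trans (Nat.le_succ _) (le_max_right n m))
    rw [← hA] at hmem
    exact LinearMap.mem_ker.mp hmem
  rw [hx', Finset.smul_sum]
  refine Finset.sum_eq_zero fun j _ => ?_
  rw [smul_smul, key j, zero_smul]
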